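/- For every m ≥ 0, the number of walks of length 2m constrained to the first octant (all positions (x,y) satisfy x ≥ y ≥ 0) that end on the diagonal y = x equals C_m · C_{m+1}, where C_m denotes the m-th Catalan number. -/

import Mathlib

/-- A walk of length `n` with unit steps N, S, E, W. -/
def IsWalk {n : ℕ} (w : Fin n → ℤ × ℤ) : Prop :=
  ∀ l, w l = (0, 1) ∨ w l = (0, -1) ∨ w l = (1, 0) ∨ w l = (-1, 0)

/-- Position of the walk `w` after `a` steps. -/
def pos {n : ℕ} (w : Fin n → ℤ × ℤ) (a : ℕ) : ℤ × ℤ :=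
  ∑ l ∈ Finset.univ.filter (fun l : Fin n => (l : ℕ) < a), w l

open Finset

def isgn (b : Bool) : ℤ := cond b 1 (-1)

def cnt : ℕ → ℤ → ℤ → ℕ
  | 0, u, v => if u = 1 ∧ v = 3 then 1 else 0
  | n+1, u, v => if 1 ≤ u ∧ u + 2 ≤ v then
      cnt n (u-1) (v-1) + cnt n (u-1) (v+1) + cnt n (u+1) (v-1) + cnt n (u+1) (v+1)
    else 0

def Qs {n : ℕ} (f : Fin n → Bool × Bool) (a : ℕ) : ℤ :=
  ∑ l ∈ Finset.univ.filter (fun l : Fin n => (l : ℕ) < a), isgn (f l).2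

def Ps {n : ℕ} (f : Fin n → Bool × Bool) (a : ℕ) : ℤ :=
  ∑ l ∈ Finset.univ.filter (fun l : Fin n => (l : ℕ) < a), isgn (f l).1

def Good {n : ℕ} (f : Fin n → Bool × Bool) : Prop :=
  ∀ a ≤ n, 0 ≤ Qs f a ∧ Qs f a ≤ Ps f a

instance {n : ℕ} (f : Fin n → Bool × Bool) : Decidable (Good f) :=
  decidable_of_iff (∀ a ≤ n, 0 ≤ Qs f a ∧ Qs f a ≤ Ps f a) Iff.rfl

lemma Qs_snoc {n : ℕ} (f : Fin n → Bool × Bool) (b : Bool × Bool) (a : ℕ) :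
    Qs (Fin.snoc f b) a = Qs f a + if n < a then isgn b.2 else 0 := by
  unfold Qs
  rw [Finset.sum_filter, Finset.sum_filter, Fin.sum_univ_castSucc]
  simp [Fin.snoc_castSucc, Fin.snoc_last]

lemma Ps_snoc {n : ℕ} (f : Fin n → Bool × Bool) (b : Bool × Bool) (a : ℕ) :
    Ps (Fin.snoc f b) a = Ps f a + if n < a then isgn b.1 else 0 := by
  unfold Ps
  rw [Finset.sum_filter, Finset.sum_filter, Fin.sum_univ_castSucc]
  simp [Fin.snoc_castSucc, Fin.snoc_last]

lemma Qs_stable {n : ℕ} (f : Fin n → Bool × Bool) {a : ℕ} (h : n ≤ a) : Qs f a = Qs f n := by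
  unfold Qs
  rw [Finset.filter_true_of_mem (fun l _ => lt_of_lt_of_le l.isLt h),
    Finset.filter_true_of_mem (fun l _ => l.isLt)]

lemma Ps_stable {n : ℕ} (f : Fin n → Bool × Bool) {a : ℕ} (h : n ≤ a) : Ps f a = Ps f n := by
  unfold Ps
  rw [Finset.filter_true_of_mem (fun l _ => lt_of_lt_of_le l.isLt h),
    Finset.filter_true_of_mem (fun l _ => l.isLt)]

def mySnocEquiv (n : ℕ) : ((Fin n → Bool × Bool) × (Bool × Bool)) ≃ (Fin (n+1) → Bool × Bool) where
  toFun p := Fin.snoc p.1 p.2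
  invFun g := (Fin.init g, g (Fin.last n))
  left_inv p := by simp
  right_inv g := by simp

lemma step_iff {n : ℕ} (f : Fin n → Bool × Bool) (b : Bool × Bool) (u v : ℤ) :
    (Good (Fin.snoc f b) ∧ Qs (Fin.snoc f b) (n+1) + 1 = u ∧ Ps (Fin.snoc f b) (n+1) + 3 = v)
    ↔ ((1 ≤ u ∧ u + 2 ≤ v) ∧
        (Good f ∧ Qs f n + 1 = u - isgn b.2 ∧ Ps f n + 3 = v - isgn b.1)) := by
  have hq : ∀ a ≤ n, Qs (Fin.snoc f b) a = Qs f a := by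
    intro a ha; rw [Qs_snoc, if_neg (by omega), add_zero]
  have hp : ∀ a ≤ n, Ps (Fin.snoc f b) a = Ps f a := by
    intro a ha; rw [Ps_snoc, if_neg (by omega), add_zero]
  have hqe : Qs (Fin.snoc f b) (n+1) = Qs f n + isgn b.2 := by
    rw [Qs_snoc, if_pos (by omega), Qs_stable f (by omega)]
  have hpe : Ps (Fin.snoc f b) (n+1) = Ps f n + isgn b.1 := by
    rw [Ps_snoc, if_pos (by omega), Ps_stable f (by omega)]
  constructor
  · rintro ⟨hg, he1, he2⟩
    have hgn := hg (n+1) le_rfl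
    rw [hqe] at he1 hgn
    rw [hpe] at he2 hgn
    refine ⟨⟨by omega, by omega⟩, ?_, by omega, by omega⟩
    intro a ha
    rw [← hq a ha, ← hp a ha]
    exact hg a (by omega)
  · rintro ⟨⟨hru, hrv⟩, hgf, he1, he2⟩
    refine ⟨?_, by rw [hqe]; omega, by rw [hpe]; omega⟩
    intro a ha
    rcases Nat.lt_succ_iff_lt_or_eq.mp (Nat.lt_succ_of_le ha) with h | h
    · rw [hq a (by omega), hp a (by omega)]
      exact hgf a (by omega)
    · subst h
      rw [hqe, hpe]
      omega

lemma cnt_eq : ∀ (n : ℕ) (u v : ℤ),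
    (∑ f : Fin n → Bool × Bool,
      if Good f ∧ Qs f n + 1 = u ∧ Ps f n + 3 = v then 1 else 0) = cnt n u v := by
  intro n
  induction n with
  | zero =>
    intro u v
    have hQ : ∀ (f : Fin 0 → Bool × Bool) (a : ℕ), Qs f a = 0 := by
      intro f a; simp [Qs]
    have hP : ∀ (f : Fin 0 → Bool × Bool) (a : ℕ), Ps f a = 0 := by
      intro f a; simp [Ps]
    have hiff : ∀ f : Fin 0 → Bool × Bool,
        (Good f ∧ Qs f 0 + 1 = u ∧ Ps f 0 + 3 = v) ↔ (u = 1 ∧ v = 3) := by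
      intro f
      constructor
      · rintro ⟨-, h1, h2⟩; rw [hQ] at h1; rw [hP] at h2; omega
      · rintro ⟨h1, h2⟩
        refine ⟨fun a _ => by rw [hQ, hP]; omega, by rw [hQ]; omega, by rw [hP]; omega⟩
    rw [Finset.sum_congr rfl (fun f _ => if_congr (hiff f) rfl rfl), Finset.sum_const]
    show _ • _ = cnt 0 u v
    simp [cnt]
  | succ n ih =>
    intro u v
    rw [← Equiv.sum_comp (mySnocEquiv n)
      (fun g => if Good g ∧ Qs g (n+1) + 1 = u ∧ Ps g (n+1) + 3 = v then 1 else 0)]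
    show (∑ p : (Fin n → Bool × Bool) × (Bool × Bool), if Good (Fin.snoc p.1 p.2) ∧ Qs (Fin.snoc p.1 p.2) (n+1) + 1 = u ∧ Ps (Fin.snoc p.1 p.2) (n+1) + 3 = v then 1 else 0) = cnt (n+1) u v
    rw [Fintype.sum_prod_type]
    by_cases hR : 1 ≤ u ∧ u + 2 ≤ v
    · have hcongr : ∀ (f : Fin n → Bool × Bool) (b : Bool × Bool),
          (if Good (Fin.snoc f b) ∧ Qs (Fin.snoc f b) (n+1) + 1 = u
              ∧ Ps (Fin.snoc f b) (n+1) + 3 = v then 1 else 0)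
          = (if Good f ∧ Qs f n + 1 = u - isgn b.2 ∧ Ps f n + 3 = v - isgn b.1 then 1 else 0) := by
        intro f b
        refine if_congr ?_ rfl rfl
        rw [step_iff]
        exact and_iff_right hR
      rw [Finset.sum_congr rfl (fun f _ => Finset.sum_congr rfl (fun b _ => hcongr f b))]
      rw [Finset.sum_comm, Fintype.sum_prod_type, Fintype.sum_bool]
      rw [Fintype.sum_bool, Fintype.sum_bool]
      show ((∑ x : Fin n → Bool × Bool, if Good x ∧ Qs x n + 1 = u - 1 ∧ Ps x n + 3 = v - 1 then 1 else 0) + (∑ x : Fin n → Bool × Bool, if Good x ∧ Qs x n + 1 = u + 1 ∧ Ps x n + 3 = v - 1 then 1 else 0)) + ((∑ x : Fin n → Bool × Bool, if Good x ∧ Qs x n + 1 = u - 1 ∧ Ps x n + 3 = v + 1 then 1 else 0) + (∑ x : Fin n → Bool × Bool, if Good x ∧ Qs x n + 1 = u + 1 ∧ Ps x n + 3 = v + 1 then 1 else 0)) = cnt (n + 1) u v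
      rw [ih (u-1) (v-1), ih (u+1) (v-1), ih (u-1) (v+1), ih (u+1) (v+1)]
      show _ = cnt (n+1) u v
      simp only [cnt]
      rw [if_pos hR]
      omega
    · have hcongr : ∀ (f : Fin n → Bool × Bool) (b : Bool × Bool),
          (if Good (Fin.snoc f b) ∧ Qs (Fin.snoc f b) (n+1) + 1 = u
              ∧ Ps (Fin.snoc f b) (n+1) + 3 = v then 1 else 0) = 0 := by
        intro f b
        rw [if_neg]
        rw [step_iff]
        tauto
      rw [Finset.sum_congr rfl (fun f _ => Finset.sum_congr rfl (fun b _ => hcongr f b))]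
      show _ = cnt (n+1) u v
      simp only [cnt]
      rw [if_neg hR]
      simp

lemma filter_univ_eq {n : ℕ} : (Finset.univ.filter (fun l : Fin n => (l:ℕ) < n)) = Finset.univ :=
  Finset.filter_true_of_mem (fun l _ => l.isLt)

lemma Ps_le {n : ℕ} (f : Fin n → Bool × Bool) : Ps f n ≤ (n:ℤ) := by
  unfold Ps
  rw [filter_univ_eq]
  calc ∑ l : Fin n, isgn (f l).1 ≤ ∑ _l : Fin n, (1:ℤ) :=
        Finset.sum_le_sum (fun l _ => by cases (f l).1 <;> norm_num [isgn])
    _ = n := by simp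

lemma Ps_parity {n : ℕ} (f : Fin n → Bool × Bool) : 2 ∣ Ps f n + (n:ℤ) := by
  unfold Ps
  rw [filter_univ_eq]
  have h : (∑ l : Fin n, isgn (f l).1) + (n:ℤ) = ∑ l : Fin n, (isgn (f l).1 + 1) := by
    rw [Finset.sum_add_distrib]; simp
  rw [h]
  apply Finset.dvd_sum
  intro l _
  cases (f l).1 <;> norm_num [isgn]

lemma fiber (m : ℕ) (f : Fin (2*m) → Bool × Bool) :
    (if Good f ∧ Qs f (2*m) = 0 then 1 else 0)
      = ∑ h ∈ Finset.range (m+1),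
          (if Good f ∧ Qs f (2*m) + 1 = 1 ∧ Ps f (2*m) + 3 = 3 + 2*(h:ℤ) then 1 else 0) := by
  by_cases hf : Good f ∧ Qs f (2*m) = 0
  · obtain ⟨hg, hq⟩ := hf
    have h1 : 0 ≤ Ps f (2*m) := by have := hg (2*m) le_rfl; omega
    have h2 : Ps f (2*m) ≤ ((2*m : ℕ):ℤ) := Ps_le f
    have h3 : 2 ∣ Ps f (2*m) + ((2*m : ℕ):ℤ) := Ps_parity f
    push_cast at h2 h3
    obtain ⟨h0, hh0m, hps⟩ : ∃ h0 : ℕ, h0 ≤ m ∧ Ps f (2*m) = 2*(h0:ℤ) :=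
      ⟨(Ps f (2*m)).toNat / 2, by omega, by omega⟩
    rw [if_pos ⟨hg, hq⟩]
    have hc : ∀ h ∈ Finset.range (m+1),
        (if Good f ∧ Qs f (2*m) + 1 = 1 ∧ Ps f (2*m) + 3 = 3 + 2*(h:ℤ) then 1 else 0)
          = if h = h0 then 1 else 0 := by
      intro h _
      refine if_congr ?_ rfl rfl
      constructor
      · rintro ⟨-, -, he⟩
        have : (h:ℤ) = (h0:ℤ) := by omega
        exact_mod_cast this
      · rintro rfl
        exact ⟨hg, by omega, by omega⟩
    rw [Finset.sum_congr rfl hc, Finset.sum_ite_eq' (Finset.range (m+1)) h0 (fun _ => 1),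
      if_pos (Finset.mem_range.mpr (by omega))]
  · rw [if_neg hf]
    symm
    apply Finset.sum_eq_zero
    intro h _
    rw [if_neg]
    rintro ⟨hg, hq, -⟩
    exact hf ⟨hg, by omega⟩

lemma count_eq (m : ℕ) :
    (∑ f : Fin (2*m) → Bool × Bool, if Good f ∧ Qs f (2*m) = 0 then 1 else 0)
      = ∑ h ∈ Finset.range (m+1), cnt (2*m) 1 (3+2*(h:ℤ)) := by
  rw [Finset.sum_congr rfl (fun f _ => fiber m f), Finset.sum_comm]
  exact Finset.sum_congr rfl (fun h _ => cnt_eq (2*m) 1 (3+2*(h:ℤ)))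

def stp (b : Bool × Bool) : ℤ × ℤ := cond b.1 (cond b.2 (1,0) (0,1)) (cond b.2 (0,-1) (-1,0))

def dec (s : ℤ × ℤ) : Bool × Bool := (decide (0 < s.1 + s.2), decide (0 < s.1 - s.2))

lemma stp_isWalk {n : ℕ} (f : Fin n → Bool × Bool) : IsWalk (fun l => stp (f l)) := by
  intro l
  rcases hfl : f l with ⟨b1, b2⟩
  cases b1 <;> cases b2 <;> simp [stp, hfl]

lemma dec_stp (b : Bool × Bool) : dec (stp b) = b := by
  rcases b with ⟨b1, b2⟩
  cases b1 <;> cases b2 <;> norm_num [stp, dec]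

lemma stp_dec {s : ℤ × ℤ} (hs : s = (0,1) ∨ s = (0,-1) ∨ s = (1,0) ∨ s = (-1,0)) :
    stp (dec s) = s := by
  rcases hs with h|h|h|h <;> subst h <;> norm_num [stp, dec]

lemma pos_add {n : ℕ} (f : Fin n → Bool × Bool) (a : ℕ) :
    (pos (fun l => stp (f l)) a).1 + (pos (fun l => stp (f l)) a).2 = Ps f a := by
  unfold pos Ps
  rw [Prod.fst_sum, Prod.snd_sum, ← Finset.sum_add_distrib]
  apply Finset.sum_congr rfl
  intro l _
  rcases hfl : f l with ⟨b1, b2⟩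
  cases b1 <;> cases b2 <;> norm_num [stp, isgn, hfl]

lemma pos_sub {n : ℕ} (f : Fin n → Bool × Bool) (a : ℕ) :
    (pos (fun l => stp (f l)) a).1 - (pos (fun l => stp (f l)) a).2 = Qs f a := by
  unfold pos Qs
  rw [Prod.fst_sum, Prod.snd_sum, ← Finset.sum_sub_distrib]
  apply Finset.sum_congr rfl
  intro l _
  rcases hfl : f l with ⟨b1, b2⟩
  cases b1 <;> cases b2 <;> norm_num [stp, isgn, hfl]

def modelEquiv (n : ℕ) :
    {f : Fin n → Bool × Bool // Good f ∧ Qs f n = 0} ≃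
    {w : Fin n → ℤ × ℤ // IsWalk w ∧ (∀ a ≤ n, (pos w a).2 ≤ (pos w a).1 ∧ 0 ≤ (pos w a).2)
        ∧ (pos w n).2 = (pos w n).1} where
  toFun p := ⟨fun l => stp (p.1 l), stp_isWalk p.1, fun a ha => by
      have h1 := pos_add p.1 a
      have h2 := pos_sub p.1 a
      have h3 := p.2.1 a ha
      omega,
    by
      have h2 := pos_sub p.1 n
      have h3 := p.2.2
      omega⟩
  invFun w := by
    refine ⟨fun l => dec (w.1 l), ?_, ?_⟩
    · intro a ha
      have hw : (fun l => stp (dec (w.1 l))) = w.1 := funext (fun l => stp_dec (w.2.1 l))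
      have h1 := pos_add (fun l => dec (w.1 l)) a
      have h2 := pos_sub (fun l => dec (w.1 l)) a
      rw [hw] at h1 h2
      have h3 := w.2.2.1 a ha
      omega
    · have hw : (fun l => stp (dec (w.1 l))) = w.1 := funext (fun l => stp_dec (w.2.1 l))
      have h2 := pos_sub (fun l => dec (w.1 l)) n
      rw [hw] at h2
      have h3 := w.2.2.2
      omega
  left_inv p := Subtype.ext (funext fun l => dec_stp (p.1 l))
  right_inv w := Subtype.ext (funext fun l => stp_dec (w.2.1 l))


def bin : ℕ → ℤ → ℕ
  | 0, d => if d = 0 then 1 else 0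
  | n+1, d => bin n (d-1) + bin n (d+1)

def phi (n : ℕ) (u v : ℤ) : ℤ :=
  (bin n (u-1) * bin n (v-3) - bin n (u+1) * bin n (v-3)
   - bin n (u-1) * bin n (v+3) + bin n (u+1) * bin n (v+3)
   - bin n (u-3) * bin n (v-1) + bin n (u+3) * bin n (v-1)
   + bin n (u-3) * bin n (v+1) - bin n (u+3) * bin n (v+1))

lemma bin_neg : ∀ (n : ℕ) (d : ℤ), bin n (-d) = bin n d := by
  intro n
  induction n with
  | zero => intro d; simp [bin, neg_eq_zero]
  | succ n ih =>
    intro d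
    show bin n (-d-1) + bin n (-d+1) = bin n (d-1) + bin n (d+1)
    have h1 : -d-1 = -(d+1) := by ring
    have h2 : -d+1 = -(d-1) := by ring
    rw [h1, h2, ih, ih, Nat.add_comm]

lemma bin_low : ∀ (n : ℕ) (d : ℤ), d + n < 0 → bin n d = 0 := by
  intro n
  induction n with
  | zero => intro d h; simp only [bin]; rw [if_neg]; omega
  | succ n ih =>
    intro d h
    show bin n (d-1) + bin n (d+1) = 0
    rw [ih (d-1) (by push_cast at h ⊢; omega), ih (d+1) (by push_cast at h ⊢; omega)]

lemma binval : ∀ (n k : ℕ), bin n (2*(k:ℤ) - n) = n.choose k := by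
  intro n
  induction n with
  | zero => intro k; cases k with
    | zero => simp [bin]
    | succ k => simp only [bin]; rw [if_neg (by push_cast; omega)]; simp
  | succ n ih =>
    intro k
    show bin n (2*(k:ℤ) - (n+1) - 1) + bin n (2*(k:ℤ) - (n+1) + 1) = (n+1).choose k
    cases k with
    | zero =>
      rw [bin_low n _ (by push_cast; omega)]
      push_cast
      rw [show (0:ℤ) - (↑n + 1) + 1 = 2*((0:ℕ):ℤ) - n by push_cast; ring, ih 0]
      simp
    | succ k =>
      have h1 : 2*((k:ℤ)+1) - (n+1) - 1 = 2*(k:ℤ) - n := by ring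
      have h2 : 2*((k:ℤ)+1) - (n+1) + 1 = 2*((k:ℤ)+1) - n := by ring
      push_cast
      rw [h1, h2, ih k]
      have := ih (k+1)
      push_cast at this
      rw [this, Nat.choose_succ_succ]

lemma phi_wall_left (n : ℕ) (v : ℤ) : phi n 0 v = 0 := by
  unfold phi
  have h1 : (0:ℤ)-1 = -1 := by ring
  have h3 : (0:ℤ)-3 = -3 := by ring
  rw [h1, h3, show ((0:ℤ)+1) = 1 by ring, show ((0:ℤ)+3) = 3 by ring,
    bin_neg n 1, bin_neg n 3]
  ring

lemma phi_wall_diag (n : ℕ) (u : ℤ) : phi n u u = 0 := by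
  unfold phi; ring

lemma bin_succ_cast (n : ℕ) (d : ℤ) : ((bin (n+1) d : ℕ) : ℤ) = bin n (d-1) + bin n (d+1) := by
  show ((bin n (d-1) + bin n (d+1) : ℕ) : ℤ) = _
  push_cast
  rfl

lemma phi_succ (n : ℕ) (u v : ℤ) : phi (n+1) u v =
    phi n (u-1) (v-1) + phi n (u-1) (v+1) + phi n (u+1) (v-1) + phi n (u+1) (v+1) := by
  unfold phi
  simp only [bin_succ_cast]
  ring_nf

lemma cnt_out (n : ℕ) (u v : ℤ) (h : ¬(1 ≤ u ∧ u + 2 ≤ v)) : cnt n u v = 0 := by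
  cases n with
  | zero => simp only [cnt]; rw [if_neg (by omega)]
  | succ n => simp only [cnt]; rw [if_neg h]

lemma phi_eq_cnt : ∀ (n : ℕ) (u v : ℤ), 1 ≤ u → u + 2 ≤ v → (2 ∣ u + n + 1) → (2 ∣ v + n + 1) →
    phi n u v = cnt n u v := by
  intro n
  induction n with
  | zero =>
    intro u v hu hv hpu hpv
    simp only [cnt, Nat.cast_ite, Nat.cast_one, Nat.cast_zero]
    by_cases h : u = 1 ∧ v = 3
    · obtain ⟨h1, h2⟩ := h
      subst h1; subst h2
      rw [if_pos ⟨rfl, rfl⟩]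
      unfold phi
      norm_num [bin]
    · rw [if_neg h]
      unfold phi
      simp only [bin]
      rw [if_neg (by omega : ¬(u+1 = 0)), if_neg (by omega : ¬(u+3 = 0)),
        if_neg (by omega : ¬(v+3 = 0)), if_neg (by omega : ¬(v+1 = 0))]
      by_cases h1 : u - 1 = 0
      · rw [if_pos h1, if_neg (by omega : ¬(u-3 = 0)), if_neg (by omega : ¬(v-3 = 0))]
        simp
      · rw [if_neg h1]
        by_cases h2 : u - 3 = 0
        · rw [if_pos h2, if_neg (by omega : ¬(v-1 = 0))]
          simp
        · rw [if_neg h2]; simp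
  | succ n ih =>
    intro u v hu hv hpu hpv
    have aux : ∀ u' v' : ℤ, (2 ∣ u' + n + 1) → (2 ∣ v' + n + 1) → 0 ≤ u' → u' ≤ v' →
        phi n u' v' = cnt n u' v' := by
      intro u' v' hp1 hp2 h0 h1
      by_cases hz : u' = 0
      · subst hz; rw [phi_wall_left, cnt_out n _ _ (by omega)]; simp
      · by_cases hd : u' = v'
        · subst hd; rw [phi_wall_diag, cnt_out n _ _ (by omega)]; simp
        · exact ih u' v' (by omega) (by omega) hp1 hp2
    rw [phi_succ]
    show _ = ((cnt (n+1) u v : ℕ) : ℤ)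
    simp only [cnt]
    rw [if_pos ⟨hu, hv⟩]
    push_cast
    rw [aux (u-1) (v-1) (by omega) (by omega) (by omega) (by omega),
      aux (u-1) (v+1) (by omega) (by omega) (by omega) (by omega),
      aux (u+1) (v-1) (by omega) (by omega) (by omega) (by omega),
      aux (u+1) (v+1) (by omega) (by omega) (by omega) (by omega)]

lemma tele (f : ℕ → ℤ) (c K : ℕ) :
    ∑ h ∈ range K, (f h - f (h+c)) = ∑ j ∈ range c, f j - ∑ j ∈ range c, f (K + j) := by
  induction K with
  | zero => simp
  | succ K ih =>
    rw [Finset.sum_range_succ, ih]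
    have h1 := Finset.sum_range_succ (fun j => f (K + j)) c
    have h2 := Finset.sum_range_succ' (fun j => f (K + j)) c
    simp only [Nat.add_zero] at h1 h2
    have h3 : ∑ j ∈ range c, f (K + 1 + j) = ∑ j ∈ range c, f (K + (j+1)) := by
      apply Finset.sum_congr rfl; intro j _; congr 1; omega
    rw [h3]
    linarith [h1, h2]

lemma binA (m j : ℕ) : (bin (2*m) (2*(j:ℤ)) : ℤ) = ((2*m).choose (m+j) : ℤ) := by
  have := binval (2*m) (m+j)
  rw [show 2*(((m+j:ℕ)):ℤ) - ((2*m : ℕ):ℤ) = 2*(j:ℤ) by push_cast; ring] at this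
  exact_mod_cast this

lemma phi_val (m h : ℕ) :
    phi (2*m) 1 (3+2*(h:ℤ)) =
      (((2*m).choose (m+0) : ℤ) - ((2*m).choose (m+1) : ℤ)) *
        (((2*m).choose (m+h) : ℤ) - ((2*m).choose (m+(h+3)) : ℤ))
      + (((2*m).choose (m+2) : ℤ) - ((2*m).choose (m+1) : ℤ)) *
        (((2*m).choose (m+(h+1)) : ℤ) - ((2*m).choose (m+(h+2)) : ℤ)) := by
  unfold phi
  rw [show (1:ℤ)-1 = 2*((0:ℕ):ℤ) by norm_num,
      show (1:ℤ)+1 = 2*((1:ℕ):ℤ) by norm_num,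
      show (1:ℤ)-3 = -(2*((1:ℕ):ℤ)) by norm_num, bin_neg,
      show (1:ℤ)+3 = 2*((2:ℕ):ℤ) by norm_num,
      show (3+2*(h:ℤ))-3 = 2*((h:ℕ):ℤ) by ring,
      show (3+2*(h:ℤ))-1 = 2*(((h+1:ℕ)):ℤ) by push_cast; ring,
      show (3+2*(h:ℤ))+1 = 2*(((h+2:ℕ)):ℤ) by push_cast; ring,
      show (3+2*(h:ℤ))+3 = 2*(((h+3:ℕ)):ℤ) by push_cast; ring]
  rw [binA, binA, binA, binA, binA, binA, binA]
  ring

lemma key (m : ℕ) :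
    (((2*m).choose m : ℤ))^2 + ((2*m).choose m : ℤ) * ((2*m).choose (m+2) : ℤ)
      - 2 * (((2*m).choose (m+1) : ℤ))^2
    = (catalan m : ℤ) * (catalan (m+1) : ℤ) := by
  rcases Nat.eq_zero_or_pos m with hm | hm
  · subst hm; norm_num [catalan_one]
  · have h1 : ((m:ℤ)+1) * (catalan m : ℤ) = ((2*m).choose m : ℤ) := by
      exact_mod_cast congrArg (Nat.cast : ℕ → ℤ) (succ_mul_catalan_eq_centralBinom m)
    have h2 : ((m:ℤ)+2) * (catalan (m+1) : ℤ) = ((2*(m+1)).choose (m+1) : ℤ) := by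
      have := succ_mul_catalan_eq_centralBinom (m+1)
      rw [Nat.centralBinom_eq_two_mul_choose] at this
      exact_mod_cast congrArg (Nat.cast : ℕ → ℤ) this
    have h3 : ((m:ℤ)+1) * ((2*(m+1)).choose (m+1) : ℤ) = (4*(m:ℤ)+2) * ((2*m).choose m : ℤ) := by
      have := Nat.succ_mul_centralBinom_succ m
      rw [Nat.centralBinom_eq_two_mul_choose, Nat.centralBinom_eq_two_mul_choose] at this
      have := congrArg (Nat.cast : ℕ → ℤ) this
      push_cast at this
      linarith
    have h4 : ((2*m).choose (m+1) : ℤ) * ((m:ℤ)+1) = ((2*m).choose m : ℤ) * (m:ℤ) := by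
      have := Nat.choose_succ_right_eq (2*m) m
      rw [show 2*m - m = m by omega] at this
      exact_mod_cast congrArg (Nat.cast : ℕ → ℤ) this
    have h5 : ((2*m).choose (m+2) : ℤ) * ((m:ℤ)+2) = ((2*m).choose (m+1) : ℤ) * ((m:ℤ)-1) := by
      have := Nat.choose_succ_right_eq (2*m) (m+1)
      rw [show 2*m - (m+1) = m-1 by omega] at this
      have := congrArg (Nat.cast : ℕ → ℤ) this
      push_cast [Nat.cast_sub hm] at this
      linarith
    have hK : (((m:ℤ)+1)^2*((m:ℤ)+2)) ≠ 0 := by positivity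
    apply mul_right_cancel₀ hK
    set M := (m:ℤ)
    set A0 := ((2*m).choose m : ℤ)
    set A1 := ((2*m).choose (m+1) : ℤ)
    set A2 := ((2*m).choose (m+2) : ℤ)
    linear_combination (A0*(M+1)^2) * h5 + (A0*(M-1)*(M+1) - 2*(M+2)*(A1*(M+1)+A0*M)) * h4
      - ((4*M+2)*A0) * h1 - ((catalan m:ℤ)*(M+1)^2) * h2 - ((catalan m:ℤ)*(M+1)) * h3

lemma sum_phi (m : ℕ) :
    ∑ h ∈ range (m+1), phi (2*m) 1 (3+2*(h:ℤ)) = (catalan m : ℤ) * (catalan (m+1) : ℤ) := by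
  have hz : ∀ j : ℕ, m < j → ((2*m).choose (m+j) : ℤ) = 0 := by
    intro j hj
    rw [Nat.choose_eq_zero_of_lt (by omega)]
    simp
  rw [Finset.sum_congr rfl (fun h _ => phi_val m h)]
  rw [Finset.sum_add_distrib, ← Finset.mul_sum, ← Finset.mul_sum]
  rw [tele (fun j => ((2*m).choose (m+j) : ℤ)) 3 (m+1),
      tele (fun j => ((2*m).choose (m+(j+1)) : ℤ)) 1 (m+1)]
  have z1 : ∑ j ∈ range 3, ((2*m).choose (m+(m+1+j)) : ℤ) = 0 :=
    Finset.sum_eq_zero (fun j _ => hz _ (by omega))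
  have z2 : ∑ j ∈ range 1, ((2*m).choose (m+((m+1+j)+1)) : ℤ) = 0 :=
    Finset.sum_eq_zero (fun j _ => hz _ (by omega))
  rw [z1, z2]
  simp only [Finset.sum_range_succ, Finset.sum_range_zero, Finset.sum_range_one,
    Nat.add_zero, Nat.zero_add]
  rw [← key m]
  ring

theorem stmt13 (m : ℕ) :
    Nat.card {w : Fin (2 * m) → ℤ × ℤ //
      IsWalk w ∧ (∀ a ≤ 2 * m, (pos w a).2 ≤ (pos w a).1 ∧ 0 ≤ (pos w a).2) ∧ (pos w (2 * m)).2 = (pos w (2 * m)).1} =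
      catalan m * catalan (m + 1) := by
  rw [Nat.card_congr (modelEquiv (2*m)).symm]
  rw [Nat.card_eq_fintype_card, Fintype.card_subtype, Finset.card_filter]
  rw [count_eq m]
  have hcast : ((∑ h ∈ Finset.range (m+1), cnt (2*m) 1 (3+2*(h:ℤ)) : ℕ) : ℤ)
      = ((catalan m * catalan (m+1) : ℕ) : ℤ) := by
    push_cast
    rw [← sum_phi m]
    refine Finset.sum_congr rfl (fun h _ => ?_)
    exact (phi_eq_cnt (2*m) 1 (3+2*(h:ℤ)) (by omega) (by omega)
      (by omega) (by omega)).symm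
  exact_mod_cast hcast
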